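/- The periodic points of G_¬ are dense in (X, d): for every point X ∈ X and every ε > 0, there exists a point P ∈ X and an integer p ≥ 1 with G_¬^p(P) = P and d(X,P) < ε. -/

import Mathlib

noncomputable def de (n : ℕ) (E F : Fin n → Bool) : ℝ :=
  ∑ k : Fin n, if E k = F k then 0 else 1

noncomputable def ds (n : ℕ) (S T : ℕ → Fin n) : ℝ :=
  (9 / (n : ℝ)) * ∑' k : ℕ, |((S k : ℕ) : ℝ) - ((T k : ℕ) : ℝ)| / 10 ^ (k + 1)

noncomputable def dX (n : ℕ) (X Y : (ℕ → Fin n) × (Fin n → Bool)) : ℝ :=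
  de n X.2 Y.2 + ds n X.1 Y.1

def Ff (n : ℕ) (f : (Fin n → Bool) → Fin n → Bool) (i : Fin n) (x : Fin n → Bool) :
    Fin n → Bool :=
  Function.update x i (f x i)

def Gf (n : ℕ) (f : (Fin n → Bool) → Fin n → Bool)
    (X : (ℕ → Fin n) × (Fin n → Bool)) : (ℕ → Fin n) × (Fin n → Bool) :=
  (fun t => X.1 (t + 1), Ff n f (X.1 0) X.2)

def Gneg (n : ℕ) : (ℕ → Fin n) × (Fin n → Bool) → (ℕ → Fin n) × (Fin n → Bool) :=
  Gf n (fun x i => !(x i))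

lemma gneg_iter (n : ℕ) (N : ℕ) : ∀ S : ℕ → Fin n,
    ∃ v : Fin n → Bool, ∀ x : Fin n → Bool,
      (Gneg n)^[N] (S, x) = (fun t => S (t + N), fun j => xor (v j) (x j)) := by
  induction N with
  | zero =>
    intro S
    exact ⟨fun _ => false, fun x => by simp⟩
  | succ N ih =>
    intro S
    obtain ⟨v, hv⟩ := ih (fun t => S (t + 1))
    refine ⟨fun j => xor (v j) (if j = S 0 then true else false), fun x => ?_⟩
    rw [Function.iterate_succ_apply]
    rw [show Gneg n (S, x) = ((fun t => S (t + 1)), Ff n (fun y i => !(y i)) (S 0) x) from rfl]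
    rw [hv]
    refine Prod.ext ?_ ?_
    · funext t; rfl
    · funext j
      simp only [Ff, Function.update_apply]
      by_cases h : j = S 0
      · subst h; simp [Bool.xor_assoc]
      · simp [h]

theorem stmt4 (n : ℕ) (hn : 1 ≤ n) :
    ∀ X : (ℕ → Fin n) × (Fin n → Bool), ∀ ε > (0 : ℝ),
      ∃ P : (ℕ → Fin n) × (Fin n → Bool), ∃ p : ℕ, 1 ≤ p ∧
        (Gneg n)^[p] P = P ∧ dX n X P < ε := by
  intro X ε hε
  have hn' : (0 : ℝ) < n := by exact_mod_cast hn
  obtain ⟨N0, hN0⟩ := exists_pow_lt_of_lt_one hε (by norm_num : (1/10 : ℝ) < 1)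
  set N := max N0 1 with hNdef
  have hN1 : 1 ≤ N := le_max_right _ _
  have hNpos : 0 < N := hN1
  set P : (ℕ → Fin n) × (Fin n → Bool) := (fun t => X.1 (t % N), X.2) with hP
  have hS : (fun t => P.1 (t + N)) = P.1 := by
    funext t; simp [hP, Nat.add_mod_right]
  obtain ⟨v, hv⟩ := gneg_iter n N P.1
  have h1 : (Gneg n)^[N] P = (P.1, fun j => xor (v j) (P.2 j)) := by
    calc (Gneg n)^[N] P = (Gneg n)^[N] (P.1, P.2) := rfl
    _ = (fun t => P.1 (t + N), fun j => xor (v j) (P.2 j)) := hv P.2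
    _ = (P.1, fun j => xor (v j) (P.2 j)) := by rw [hS]
  have h2 : (Gneg n)^[N + N] P = P := by
    rw [Function.iterate_add_apply, h1, hv, hS]
    refine Prod.ext rfl ?_
    funext j
    simp
  refine ⟨P, N + N, by omega, h2, ?_⟩
  -- distance
  have hde : de n X.2 P.2 = 0 := by simp [de, hP]
  set f : ℕ → ℝ := fun k => |((X.1 k : ℕ) : ℝ) - ((P.1 k : ℕ) : ℝ)| / 10 ^ (k + 1) with hf
  have hf0 : ∀ k, 0 ≤ f k := fun k => by positivity
  set g : ℕ → ℝ := fun k => (n : ℝ) * (1/10) ^ (k + 1) with hg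
  have hfg : ∀ k, f k ≤ g k := by
    intro k
    have h1 : |((X.1 k : ℕ) : ℝ) - ((P.1 k : ℕ) : ℝ)| ≤ n := by
      rw [abs_sub_le_iff]
      constructor
      · have : ((X.1 k : ℕ) : ℝ) ≤ n := by
          exact_mod_cast le_of_lt (X.1 k).isLt
        have h0 : (0:ℝ) ≤ ((P.1 k : ℕ) : ℝ) := by positivity
        linarith
      · have : ((P.1 k : ℕ) : ℝ) ≤ n := by
          exact_mod_cast le_of_lt (P.1 k).isLt
        have h0 : (0:ℝ) ≤ ((X.1 k : ℕ) : ℝ) := by positivity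
        linarith
    have h2 : (10:ℝ) ^ (k+1) > 0 := by positivity
    rw [hf, hg]
    simp only
    rw [div_le_iff₀ h2]
    calc |((X.1 k : ℕ) : ℝ) - ((P.1 k : ℕ) : ℝ)| ≤ n := h1
    _ = (n : ℝ) * (1/10) ^ (k+1) * 10 ^ (k+1) := by
        rw [mul_assoc]
        norm_num
        rw [← mul_pow]
        norm_num
  have hgsum : Summable g := by
    apply Summable.mul_left
    exact (summable_geometric_of_lt_one (by norm_num) (by norm_num)).comp_injective (add_left_injective 1)
  have hfsum : Summable f := Summable.of_nonneg_of_le hf0 hfg hgsum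
  have hzero : ∀ k < N, f k = 0 := by
    intro k hk
    have : P.1 k = X.1 k := by simp [hP, Nat.mod_eq_of_lt hk]
    simp [hf, this, Nat.mod_eq_of_lt hk]
  have hsplit := Summable.sum_add_tsum_nat_add N hfsum
  have hrange : ∑ i ∈ Finset.range N, f i = 0 :=
    Finset.sum_eq_zero (fun i hi => hzero i (Finset.mem_range.mp hi))
  have htail : ∑' k, f (k + N) ≤ (n : ℝ) * (1/10) ^ N / 9 := by
    have hle : ∑' k, f (k + N) ≤ ∑' k, g (k + N) := by
      apply Summable.tsum_le_tsum (fun k => hfg (k + N))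
      · exact hfsum.comp_injective (add_left_injective N)
      · exact hgsum.comp_injective (add_left_injective N)
    have hgeq : ∑' k : ℕ, g (k + N) = (n : ℝ) * (1/10) ^ N / 9 := by
      have : ∀ k : ℕ, g (k + N) = ((n : ℝ) * (1/10) ^ (N+1)) * (1/10) ^ k := by
        intro k
        rw [hg]
        simp only
        rw [mul_assoc, ← pow_add]
        congr 2
        omega
      rw [tsum_congr this, tsum_mul_left, tsum_geometric_of_lt_one (by norm_num) (by norm_num)]
      rw [pow_succ]
      ring_nf
    linarith [hle, hgeq.le, hgeq.ge]
  have htsum : ∑' k, f k ≤ (n : ℝ) * (1/10) ^ N / 9 := by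
    rw [← hsplit, hrange, zero_add]; exact htail
  have hds : ds n X.1 P.1 ≤ (1/10 : ℝ) ^ N := by
    have : ds n X.1 P.1 = (9 / n) * ∑' k, f k := rfl
    rw [this]
    calc (9 / (n:ℝ)) * ∑' k, f k ≤ (9 / n) * ((n : ℝ) * (1/10) ^ N / 9) := by
          apply mul_le_mul_of_nonneg_left htsum (by positivity)
    _ = (1/10 : ℝ) ^ N := by field_simp
  have hfinal : (1/10 : ℝ) ^ N ≤ (1/10 : ℝ) ^ N0 :=
    pow_le_pow_of_le_one (by norm_num) (by norm_num) (le_max_left _ _)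
  have : dX n X P = ds n X.1 P.1 := by rw [dX, hde, zero_add]
  rw [this]
  exact lt_of_le_of_lt (le_trans hds hfinal) hN0
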